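/- The conjugation identity f_θ = G_{Sθ}⁻¹ ∘ f̂_θ ∘ G_θ holds on K(θ) for every θ ∈ Θ, where G_θ = G_{θ,σΠθ} and f̂_θ = f_{S^{−1}(σΠSθ)} ∘ G_{σΠθ, S^{−1}σΠSθ}. -/

import Mathlib

open Set Filter

/-- Iterates of the fibre maps: `fiter S f n θ = f_{S^{n-1}θ} ∘ ⋯ ∘ f_θ`. -/
def fiter {Θ : Type*} (S : Θ → Θ) (f : Θ → ℝ → ℝ) : ℕ → Θ → ℝ → ℝ
  | 0, _, y => y
  | n + 1, θ, y => f (S^[n] θ) (fiter S f n θ y)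

/-- The maps `G_{θ,θ',n} = f^n_{S^{-n}θ'} ∘ (f^n_{S^{-n}θ})⁻¹` on `K_n(θ)`. -/
noncomputable def Gn {Θ : Type*} (S : Θ ≃ Θ) (f : Θ → ℝ → ℝ) (M : ℝ)
    (θ θ' : Θ) (n : ℕ) (y : ℝ) : ℝ :=
  fiter S f n ((⇑S.symm)^[n] θ')
    (Function.invFunOn (fiter S f n ((⇑S.symm)^[n] θ)) (Icc (-M) M) y)

namespace Stmt12Aux

/-- `gs S f n θ = f^n_{S^{-n}θ}`. -/
def gs {Θ : Type*} (S : Θ ≃ Θ) (f : Θ → ℝ → ℝ) (n : ℕ) (θ : Θ) : ℝ → ℝ :=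
  fiter S f n ((⇑S.symm)^[n] θ)

section Basic

variable {Θ : Type*} (S : Θ ≃ Θ) (f : Θ → ℝ → ℝ)

lemma iter_cancel (n : ℕ) (x : Θ) : (⇑S)^[n] ((⇑S.symm)^[n] x) = x := by
  induction n generalizing x with
  | zero => rfl
  | succ n ih =>
    rw [show (⇑S.symm)^[n + 1] x = ⇑S.symm ((⇑S.symm)^[n] x) from
      Function.iterate_succ_apply' _ _ _,
      Function.iterate_succ_apply (⇑S) n, Equiv.apply_symm_apply]
    exact ih x

lemma gs_succ (n : ℕ) (θ : Θ) (x : ℝ) :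
    gs S f (n + 1) θ x = f (S.symm θ) (gs S f n (S.symm θ) x) := by
  unfold gs
  rw [show (⇑S.symm)^[n + 1] θ = (⇑S.symm)^[n] (S.symm θ) from
    Function.iterate_succ_apply _ _ _]
  show f ((⇑S)^[n] ((⇑S.symm)^[n] (S.symm θ))) _ = _
  rw [iter_cancel]

lemma gs_split (k m : ℕ) (θ : Θ) (x : ℝ) :
    gs S f (k + m) θ x = gs S f k θ (gs S f m ((⇑S.symm)^[k] θ) x) := by
  induction k generalizing θ with
  | zero => simp [gs, fiter]
  | succ k ih =>
    rw [show k + 1 + m = (k + m) + 1 from by omega, gs_succ, ih,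
      show (⇑S.symm)^[k] (S.symm θ) = (⇑S.symm)^[k + 1] θ from
        (Function.iterate_succ_apply _ _ _).symm,
      ← gs_succ S f k θ (gs S f m ((⇑S.symm)^[k + 1] θ) x)]

end Basic

section Analytic

variable {Θ : Type*} [MetricSpace Θ] (S : Θ ≃ Θ) {f : Θ → ℝ → ℝ} {M : ℝ}

lemma fiter_mapsTo (hmaps : ∀ θ, MapsTo (f θ) (Icc (-M) M) (Ioo (-M) M))
    (n : ℕ) (ϑ : Θ) : MapsTo (fiter (⇑S) f n ϑ) (Icc (-M) M) (Icc (-M) M) := by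
  induction n with
  | zero => exact fun y hy => hy
  | succ n ih =>
    intro y hy
    exact Ioo_subset_Icc_self (hmaps _ (ih hy))

lemma gs_mapsTo (hmaps : ∀ θ, MapsTo (f θ) (Icc (-M) M) (Ioo (-M) M))
    (n : ℕ) (θ : Θ) : MapsTo (gs S f n θ) (Icc (-M) M) (Icc (-M) M) :=
  fiter_mapsTo S hmaps n _

lemma fiter_contOn (hmaps : ∀ θ, MapsTo (f θ) (Icc (-M) M) (Ioo (-M) M))
    (hfc : ∀ θ, ContinuousOn (f θ) (Icc (-M) M)) (n : ℕ) (ϑ : Θ) :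
    ContinuousOn (fiter (⇑S) f n ϑ) (Icc (-M) M) := by
  induction n with
  | zero => exact continuousOn_id
  | succ n ih =>
    exact (hfc _).comp ih (fiter_mapsTo S hmaps n ϑ)

lemma gs_contOn (hmaps : ∀ θ, MapsTo (f θ) (Icc (-M) M) (Ioo (-M) M))
    (hfc : ∀ θ, ContinuousOn (f θ) (Icc (-M) M)) (n : ℕ) (θ : Θ) :
    ContinuousOn (gs S f n θ) (Icc (-M) M) :=
  fiter_contOn S hmaps hfc n _

lemma fiter_mono (hmaps : ∀ θ, MapsTo (f θ) (Icc (-M) M) (Ioo (-M) M))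
    (hmono : ∀ θ, StrictMonoOn (f θ) (Icc (-M) M)) (n : ℕ) (ϑ : Θ) :
    StrictMonoOn (fiter (⇑S) f n ϑ) (Icc (-M) M) := by
  induction n with
  | zero => exact fun a _ b _ h => h
  | succ n ih =>
    exact (hmono _).comp ih (fiter_mapsTo S hmaps n ϑ)

lemma gs_mono (hmaps : ∀ θ, MapsTo (f θ) (Icc (-M) M) (Ioo (-M) M))
    (hmono : ∀ θ, StrictMonoOn (f θ) (Icc (-M) M)) (n : ℕ) (θ : Θ) :
    StrictMonoOn (gs S f n θ) (Icc (-M) M) :=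
  fiter_mono S hmaps hmono n _

lemma gs_lip {Qf : ℝ} (hQf0 : 0 ≤ Qf)
    (hmaps : ∀ θ, MapsTo (f θ) (Icc (-M) M) (Ioo (-M) M))
    (hflip : ∀ θ, ∀ a ∈ Icc (-M) M, ∀ b ∈ Icc (-M) M, |f θ a - f θ b| ≤ Qf * |a - b|)
    (n : ℕ) (θ : Θ) :
    ∀ a ∈ Icc (-M) M, ∀ b ∈ Icc (-M) M,
      |gs S f n θ a - gs S f n θ b| ≤ Qf ^ n * |a - b| := by
  induction n generalizing θ with
  | zero => intro a _ b _; simp [gs, fiter]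
  | succ n ih =>
    intro a ha b hb
    rw [gs_succ, gs_succ]
    calc |f (S.symm θ) (gs S f n (S.symm θ) a) - f (S.symm θ) (gs S f n (S.symm θ) b)|
        ≤ Qf * |gs S f n (S.symm θ) a - gs S f n (S.symm θ) b| :=
          hflip _ _ (gs_mapsTo S hmaps n _ ha) _ (gs_mapsTo S hmaps n _ hb)
      _ ≤ Qf * (Qf ^ n * |a - b|) := by
          exact mul_le_mul_of_nonneg_left (ih _ a ha b hb) hQf0
      _ = Qf ^ (n + 1) * |a - b| := by ring

/-- The key comparison estimate: if the backward orbits of `θ₁, θ₂` are exponentially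
`C·αʲ·D`-close, then `gs n θ₂` and `gs n θ₁` are uniformly `L·C·D·α/(1-α·Qf)`-close. -/
lemma gs_comp {L C α Qf : ℝ} (hL : 0 ≤ L) (hC : 0 < C) (hα : α ∈ Ioo (0:ℝ) 1)
    (hQf0 : 0 ≤ Qf) (hαQ : α * Qf < 1)
    (hmaps : ∀ θ, MapsTo (f θ) (Icc (-M) M) (Ioo (-M) M))
    (hLip : ∀ θ θ' : Θ, ∀ y ∈ Icc (-M) M, |f θ y - f θ' y| ≤ L * dist θ θ')
    (hflip : ∀ θ, ∀ a ∈ Icc (-M) M, ∀ b ∈ Icc (-M) M, |f θ a - f θ b| ≤ Qf * |a - b|)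
    (n : ℕ) :
    ∀ (θ₁ θ₂ : Θ) (D : ℝ), 0 ≤ D →
      (∀ j : ℕ, dist ((⇑S.symm)^[j] θ₁) ((⇑S.symm)^[j] θ₂) ≤ C * α ^ j * D) →
      ∀ x ∈ Icc (-M) M,
        |gs S f n θ₂ x - gs S f n θ₁ x| ≤ L * C * D * α / (1 - α * Qf) := by
  have hden : 0 < 1 - α * Qf := by linarith
  induction n with
  | zero =>
    intro θ₁ θ₂ D hD _ x _
    simp only [gs, fiter, sub_self, abs_zero]
    exact div_nonneg
      (mul_nonneg (mul_nonneg (mul_nonneg hL hC.le) hD) hα.1.le) hden.le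
  | succ n ih =>
    intro θ₁ θ₂ D hD hd x hx
    rw [gs_succ, gs_succ]
    set a := gs S f n (S.symm θ₁) x with ha
    set b := gs S f n (S.symm θ₂) x with hb
    have haI : a ∈ Icc (-M) M := gs_mapsTo S hmaps n _ hx
    have hbI : b ∈ Icc (-M) M := gs_mapsTo S hmaps n _ hx
    have h1 : |f (S.symm θ₂) b - f (S.symm θ₁) b| ≤ L * (C * α * D) := by
      refine le_trans (hLip _ _ _ hbI) ?_
      have := hd 1
      simp only [Function.iterate_one] at this
      have hds : dist (S.symm θ₂) (S.symm θ₁) ≤ C * α ^ 1 * D := by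
        rw [dist_comm]; exact this
      have : dist (S.symm θ₂) (S.symm θ₁) ≤ C * α * D := by
        simpa [pow_one] using hds
      nlinarith [dist_nonneg (x := S.symm θ₂) (y := S.symm θ₁)]
    have h2 : |b - a| ≤ L * C * (α * D) * α / (1 - α * Qf) := by
      refine ih (S.symm θ₁) (S.symm θ₂) (α * D) (mul_nonneg hα.1.le hD) ?_ x hx
      intro j
      have := hd (j + 1)
      rw [show (⇑S.symm)^[j] (S.symm θ₁) = (⇑S.symm)^[j + 1] θ₁ from
        (Function.iterate_succ_apply _ _ _).symm,
        show (⇑S.symm)^[j] (S.symm θ₂) = (⇑S.symm)^[j + 1] θ₂ from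
        (Function.iterate_succ_apply _ _ _).symm]
      calc dist ((⇑S.symm)^[j + 1] θ₁) ((⇑S.symm)^[j + 1] θ₂)
          ≤ C * α ^ (j + 1) * D := this
        _ = C * α ^ j * (α * D) := by ring
    have h3 : |f (S.symm θ₁) b - f (S.symm θ₁) a| ≤ Qf * |b - a| :=
      hflip _ _ hbI _ haI
    have key : |f (S.symm θ₂) b - f (S.symm θ₁) a|
        ≤ |f (S.symm θ₂) b - f (S.symm θ₁) b| + |f (S.symm θ₁) b - f (S.symm θ₁) a| := by
      have := abs_sub_abs_le_abs_sub (f (S.symm θ₂) b) (f (S.symm θ₁) a)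
      calc |f (S.symm θ₂) b - f (S.symm θ₁) a|
          = |(f (S.symm θ₂) b - f (S.symm θ₁) b) + (f (S.symm θ₁) b - f (S.symm θ₁) a)| := by
            ring_nf
        _ ≤ _ := abs_add_le _ _
    have hQb : Qf * |b - a| ≤ Qf * (L * C * (α * D) * α / (1 - α * Qf)) :=
      mul_le_mul_of_nonneg_left h2 hQf0
    have heq : L * (C * α * D) + Qf * (L * C * (α * D) * α / (1 - α * Qf))
        = L * C * D * α / (1 - α * Qf) := by
      field_simp
      ring
    linarith
  
lemma gs_neg_le_phim {φm : Θ → ℝ}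
    (hφm : ∀ ϑ : Θ, Monotone (fun n => fiter (⇑S) f n ((⇑S.symm)^[n] ϑ) (-M)) ∧
      Tendsto (fun n => fiter (⇑S) f n ((⇑S.symm)^[n] ϑ) (-M)) atTop (nhds (φm ϑ)))
    (θ : Θ) (n : ℕ) : gs S f n θ (-M) ≤ φm θ :=
  (hφm θ).1.ge_of_tendsto (hφm θ).2 n

lemma phip_le_gs {φp : Θ → ℝ}
    (hφp : ∀ ϑ : Θ, Antitone (fun n => fiter (⇑S) f n ((⇑S.symm)^[n] ϑ) M) ∧
      Tendsto (fun n => fiter (⇑S) f n ((⇑S.symm)^[n] ϑ) M) atTop (nhds (φp ϑ)))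
    (θ : Θ) (n : ℕ) : φp θ ≤ gs S f n θ M :=
  (hφp θ).1.le_of_tendsto (hφp θ).2 n

/-- Every point of `[φm θ, φp θ]` has a preimage in `[-M,M]` under `gs S f n θ`. -/
lemma gs_surj (hM : 0 < M)
    (hmaps : ∀ θ, MapsTo (f θ) (Icc (-M) M) (Ioo (-M) M))
    (hfc : ∀ θ, ContinuousOn (f θ) (Icc (-M) M))
    {φm φp : Θ → ℝ}
    (hφp : ∀ ϑ : Θ, Antitone (fun n => fiter (⇑S) f n ((⇑S.symm)^[n] ϑ) M) ∧
      Tendsto (fun n => fiter (⇑S) f n ((⇑S.symm)^[n] ϑ) M) atTop (nhds (φp ϑ)))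
    (hφm : ∀ ϑ : Θ, Monotone (fun n => fiter (⇑S) f n ((⇑S.symm)^[n] ϑ) (-M)) ∧
      Tendsto (fun n => fiter (⇑S) f n ((⇑S.symm)^[n] ϑ) (-M)) atTop (nhds (φm ϑ)))
    (θ : Θ) (n : ℕ) {w : ℝ} (hw : w ∈ Icc (φm θ) (φp θ)) :
    ∃ x ∈ Icc (-M) M, gs S f n θ x = w := by
  have hMM : (-M : ℝ) ≤ M := by linarith
  have hsub : Icc (gs S f n θ (-M)) (gs S f n θ M) ⊆ gs S f n θ '' Icc (-M) M :=
    intermediate_value_Icc hMM (gs_contOn S hmaps hfc n θ)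
  have hwmem : w ∈ Icc (gs S f n θ (-M)) (gs S f n θ M) :=
    ⟨le_trans (gs_neg_le_phim S hφm θ n) hw.1, le_trans hw.2 (phip_le_gs S hφp θ n)⟩
  obtain ⟨x, hx, hgx⟩ := hsub hwmem
  exact ⟨x, hx, hgx⟩

lemma Gn_eq (hmaps : ∀ θ, MapsTo (f θ) (Icc (-M) M) (Ioo (-M) M))
    (hmono : ∀ θ, StrictMonoOn (f θ) (Icc (-M) M))
    (θ θ' : Θ) (n : ℕ) {w x : ℝ} (hx : x ∈ Icc (-M) M)
    (hgx : gs S f n θ x = w) :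
    Gn S f M θ θ' n w = gs S f n θ' x := by
  have hex : ∃ a ∈ Icc (-M) M, fiter (⇑S) f n ((⇑S.symm)^[n] θ) a = w := ⟨x, hx, hgx⟩
  have h1 := Function.invFunOn_eq hex
  have h2 := Function.invFunOn_mem hex
  have hinj : InjOn (gs S f n θ) (Icc (-M) M) :=
    (gs_mono S hmaps hmono n θ).injOn
  have hxx : Function.invFunOn (fiter (⇑S) f n ((⇑S.symm)^[n] θ)) (Icc (-M) M) w = x :=
    hinj h2 hx (h1.trans hgx.symm)
  unfold Gn
  rw [hxx]
  rfl

/-- Sequential continuity of the inverse of a continuous injection on `[-M,M]`. -/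
lemma tendsto_of_image {g : ℝ → ℝ} (hg : ContinuousOn g (Icc (-M) M))
    (hinj : InjOn g (Icc (-M) M)) {v : ℝ} (hv : v ∈ Icc (-M) M)
    {u : ℕ → ℝ} (hu : ∀ n, u n ∈ Icc (-M) M)
    (h : Tendsto (fun n => g (u n)) atTop (nhds (g v))) :
    Tendsto u atTop (nhds v) := by
  by_contra hcon
  rw [Metric.tendsto_atTop] at hcon
  push_neg at hcon
  obtain ⟨ε, hε, hfreq⟩ := hcon
  obtain ⟨φ, hφmono, hφ⟩ := Filter.extraction_of_frequently_atTop
    (Filter.frequently_atTop.2 fun N => by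
      obtain ⟨n, hn, hd⟩ := hfreq N; exact ⟨n, hn, hd⟩)
  obtain ⟨a, ha, ψ, hψmono, hψ⟩ :=
    (isCompact_Icc : IsCompact (Icc (-M) M)).tendsto_subseq (fun n => hu (φ n))
  have hψ' : Tendsto (fun k => u (φ (ψ k))) atTop (nhds a) := hψ
  have hga : Tendsto (fun k => g (u (φ (ψ k)))) atTop (nhds (g a)) := by
    have hcw : ContinuousWithinAt g (Icc (-M) M) a := hg a ha
    exact hcw.tendsto.comp
      (tendsto_nhdsWithin_of_tendsto_nhds_of_eventually_within _ hψ'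
        (Eventually.of_forall fun k => hu _))
  have hga' : Tendsto (fun k => g (u (φ (ψ k)))) atTop (nhds (g v)) :=
    h.comp ((hφmono.comp hψmono).tendsto_atTop)
  have hav : a = v := hinj ha hv (tendsto_nhds_unique hga hga')
  have hdt : Tendsto (fun k => dist (u (φ (ψ k))) v) atTop (nhds (dist a v)) :=
    hψ'.dist tendsto_const_nhds
  have : ε ≤ dist a v := ge_of_tendsto' hdt fun k => hφ (ψ k)
  rw [hav, dist_self] at this
  linarith

/-- The moving-point lemma: if `gs n θ₁ (x n) → z` with `x n ∈ [-M,M]`, and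
`Gn θ₁ θ₂ n z → w`, then `gs n θ₂ (x n) → w`. -/
lemma moving (hM : 0 < M)
    {L C α Qf : ℝ} (hL : 0 ≤ L) (hC : 0 < C) (hα : α ∈ Ioo (0:ℝ) 1)
    (hQf0 : 0 ≤ Qf) (hαQ : α * Qf < 1)
    (hmaps : ∀ θ, MapsTo (f θ) (Icc (-M) M) (Ioo (-M) M))
    (hmono : ∀ θ, StrictMonoOn (f θ) (Icc (-M) M))
    (hfc : ∀ θ, ContinuousOn (f θ) (Icc (-M) M))
    (hLip : ∀ θ θ' : Θ, ∀ y ∈ Icc (-M) M, |f θ y - f θ' y| ≤ L * dist θ θ')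
    (hflip : ∀ θ, ∀ a ∈ Icc (-M) M, ∀ b ∈ Icc (-M) M, |f θ a - f θ b| ≤ Qf * |a - b|)
    {φm φp : Θ → ℝ}
    (hφp : ∀ ϑ : Θ, Antitone (fun n => fiter (⇑S) f n ((⇑S.symm)^[n] ϑ) M) ∧
      Tendsto (fun n => fiter (⇑S) f n ((⇑S.symm)^[n] ϑ) M) atTop (nhds (φp ϑ)))
    (hφm : ∀ ϑ : Θ, Monotone (fun n => fiter (⇑S) f n ((⇑S.symm)^[n] ϑ) (-M)) ∧
      Tendsto (fun n => fiter (⇑S) f n ((⇑S.symm)^[n] ϑ) (-M)) atTop (nhds (φm ϑ)))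
    (θ₁ θ₂ : Θ)
    (hd : ∀ j : ℕ, dist ((⇑S.symm)^[j] θ₁) ((⇑S.symm)^[j] θ₂) ≤ C * α ^ j * dist θ₁ θ₂)
    {z w : ℝ} (hz : z ∈ Icc (φm θ₁) (φp θ₁))
    (hw : Tendsto (fun n => Gn S f M θ₁ θ₂ n z) atTop (nhds w))
    {x : ℕ → ℝ} (hx : ∀ n, x n ∈ Icc (-M) M)
    (hc : Tendsto (fun n => gs S f n θ₁ (x n)) atTop (nhds z)) :
    Tendsto (fun n => gs S f n θ₂ (x n)) atTop (nhds w) := by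
  have hden : 0 < 1 - α * Qf := by linarith
  -- preimages of z at each level
  have hsur : ∀ n : ℕ, ∃ t ∈ Icc (-M) M, gs S f n θ₁ t = z := fun n =>
    gs_surj S hM hmaps hfc hφp hφm θ₁ n hz
  choose xt hxt hgxt using hsur
  have hw' : Tendsto (fun n => gs S f n θ₂ (xt n)) atTop (nhds w) :=
    hw.congr fun n => Gn_eq S hmaps hmono θ₁ θ₂ n (hxt n) (hgxt n)
  -- it suffices to show the difference tends to zero
  have hdiff : Tendsto (fun n => gs S f n θ₂ (x n) - gs S f n θ₂ (xt n)) atTop (nhds 0) := by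
    rw [Metric.tendsto_atTop]
    intro ε hε
    -- choose the cut level k
    have hKQ : Tendsto (fun k : ℕ =>
        (L * C * dist θ₁ θ₂ * α / (1 - α * Qf)) * (α * Qf) ^ k) atTop (nhds 0) := by
      have h0 : Tendsto (fun k : ℕ => (α * Qf) ^ k) atTop (nhds 0) :=
        tendsto_pow_atTop_nhds_zero_of_lt_one (mul_nonneg hα.1.le hQf0) hαQ
      simpa using h0.const_mul (L * C * dist θ₁ θ₂ * α / (1 - α * Qf))
    have hKQ' : ∀ᶠ k in atTop,
        (L * C * dist θ₁ θ₂ * α / (1 - α * Qf)) * (α * Qf) ^ k < ε / 4 := by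
      have := (hKQ.eventually (eventually_lt_nhds (show (0:ℝ) < ε / 4 by linarith)))
      exact this
    obtain ⟨k, hk⟩ := hKQ'.exists
    -- notation for the inner iterates
    set Kk : ℝ := L * C * (α ^ k * dist θ₁ θ₂) * α / (1 - α * Qf) with hKk
    have hKkeq : Qf ^ k * Kk
        = (L * C * dist θ₁ θ₂ * α / (1 - α * Qf)) * (α * Qf) ^ k := by
      rw [hKk, mul_pow]
      field_simp
    have hKknn : 0 ≤ Kk := by
      rw [hKk]
      exact div_nonneg
        (mul_nonneg (mul_nonneg (mul_nonneg hL hC.le)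
          (mul_nonneg (pow_nonneg hα.1.le k) dist_nonneg)) hα.1.le) hden.le
    -- the comparison bound at depth k
    have hcomp : ∀ (t : ℝ), t ∈ Icc (-M) M → ∀ m : ℕ,
        |gs S f m ((⇑S.symm)^[k] θ₂) t - gs S f m ((⇑S.symm)^[k] θ₁) t| ≤ Kk := by
      intro t ht m
      refine gs_comp S hL hC hα hQf0 hαQ hmaps hLip hflip m ((⇑S.symm)^[k] θ₁)
        ((⇑S.symm)^[k] θ₂) (α ^ k * dist θ₁ θ₂)
        (mul_nonneg (pow_nonneg hα.1.le k) dist_nonneg) ?_ t ht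
      intro j
      rw [← Function.iterate_add_apply, ← Function.iterate_add_apply]
      calc dist ((⇑S.symm)^[j + k] θ₁) ((⇑S.symm)^[j + k] θ₂)
          ≤ C * α ^ (j + k) * dist θ₁ θ₂ := hd (j + k)
        _ = C * α ^ j * (α ^ k * dist θ₁ θ₂) := by ring
    -- the fixed preimage of z at level k
    obtain ⟨v, hvI, hgv⟩ := gs_surj S hM hmaps hfc hφp hφm θ₁ k hz
    -- inner iterates of the moving points
    set u : ℕ → ℝ := fun n => gs S f (n - k) ((⇑S.symm)^[k] θ₁) (x n) with hu
    have huI : ∀ n, u n ∈ Icc (-M) M := fun n => gs_mapsTo S hmaps _ _ (hx n)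
    have hsplit : ∀ n, k ≤ n → gs S f n θ₁ (x n) = gs S f k θ₁ (u n) := by
      intro n hn
      simp only [hu]
      rw [show n = k + (n - k) from by omega] -- rewrites n everywhere
      rw [gs_split]
      simp only [Nat.add_sub_cancel_left]
    have hsplit₂ : ∀ n, k ≤ n → gs S f n θ₂ (x n) = gs S f k θ₂
        (gs S f (n - k) ((⇑S.symm)^[k] θ₂) (x n)) := by
      intro n hn
      rw [show n = k + (n - k) from by omega]
      rw [gs_split]
      simp only [Nat.add_sub_cancel_left]
    have hsplitt : ∀ n, k ≤ n → gs S f n θ₁ (xt n) = gs S f k θ₁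
        (gs S f (n - k) ((⇑S.symm)^[k] θ₁) (xt n)) := by
      intro n hn
      rw [show n = k + (n - k) from by omega]
      rw [gs_split]
      simp only [Nat.add_sub_cancel_left]
    have hsplitt₂ : ∀ n, k ≤ n → gs S f n θ₂ (xt n) = gs S f k θ₂
        (gs S f (n - k) ((⇑S.symm)^[k] θ₂) (xt n)) := by
      intro n hn
      rw [show n = k + (n - k) from by omega]
      rw [gs_split]
      simp only [Nat.add_sub_cancel_left]
    -- the inner iterate of xt is constantly v from level k on
    have hutv : ∀ n, k ≤ n → gs S f (n - k) ((⇑S.symm)^[k] θ₁) (xt n) = v := by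
      intro n hn
      have h1 : gs S f k θ₁ (gs S f (n - k) ((⇑S.symm)^[k] θ₁) (xt n)) = gs S f k θ₁ v := by
        rw [← hsplitt n hn, hgxt n, hgv]
      exact (gs_mono S hmaps hmono k θ₁).injOn
        (gs_mapsTo S hmaps _ _ (hxt n)) hvI h1
    -- u n → v
    have huv : Tendsto u atTop (nhds v) := by
      apply tendsto_of_image (hg := gs_contOn S hmaps hfc k θ₁)
        (hinj := (gs_mono S hmaps hmono k θ₁).injOn) (hv := hvI) (hu := huI)
      rw [hgv]
      apply hc.congr'
      filter_upwards [eventually_ge_atTop k] with n hn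
      exact hsplit n hn
    -- pick N₁ beyond which |u n - v| is small
    have hεQ : 0 < ε / (2 * (Qf ^ k + 1)) := by positivity
    obtain ⟨N₁, hN₁⟩ := (Metric.tendsto_atTop.1 huv) _ hεQ
    refine ⟨max k N₁, fun n hn => ?_⟩
    have hnk : k ≤ n := le_trans (le_max_left _ _) hn
    have hnN : N₁ ≤ n := le_trans (le_max_right _ _) hn
    rw [Real.dist_eq, sub_zero, hsplit₂ n hnk, hsplitt₂ n hnk]
    -- abbreviations
    set A := gs S f (n - k) ((⇑S.symm)^[k] θ₂) (x n) with hA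
    set B := gs S f (n - k) ((⇑S.symm)^[k] θ₂) (xt n) with hB
    have hAI : A ∈ Icc (-M) M := gs_mapsTo S hmaps _ _ (hx n)
    have hBI : B ∈ Icc (-M) M := gs_mapsTo S hmaps _ _ (hxt n)
    have hlip : |gs S f k θ₂ A - gs S f k θ₂ B| ≤ Qf ^ k * |A - B| :=
      gs_lip S hQf0 hmaps hflip k θ₂ A hAI B hBI
    have hAu : |A - u n| ≤ Kk := hcomp (x n) (hx n) (n - k)
    have hBv : |B - v| ≤ Kk := by
      have := hcomp (xt n) (hxt n) (n - k)
      rwa [hutv n hnk] at this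
    have huvn : |u n - v| < ε / (2 * (Qf ^ k + 1)) := by
      have := hN₁ n hnN
      rwa [Real.dist_eq] at this
    have hAB : |A - B| ≤ Kk + |u n - v| + Kk := by
      calc |A - B| = |(A - u n) + (u n - v) + (v - B)| := by ring_nf
        _ ≤ |(A - u n) + (u n - v)| + |v - B| := abs_add_le _ _
        _ ≤ |A - u n| + |u n - v| + |v - B| := by
            have := abs_add_le (A - u n) (u n - v)
            linarith
        _ ≤ Kk + |u n - v| + Kk := by
            rw [abs_sub_comm v B]
            linarith
    have hQfk : (0:ℝ) ≤ Qf ^ k := by positivity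
    have hQfK : Qf ^ k * Kk < ε / 4 := by rw [hKkeq]; exact hk
    have hQfu : Qf ^ k * |u n - v| < ε / 2 := by
      have h1 : Qf ^ k * |u n - v| ≤ Qf ^ k * (ε / (2 * (Qf ^ k + 1))) :=
        mul_le_mul_of_nonneg_left huvn.le hQfk
      have h2 : Qf ^ k * (ε / (2 * (Qf ^ k + 1))) < ε / 2 := by
        rw [← mul_div_assoc, div_lt_div_iff₀ (by positivity) (by norm_num : (0:ℝ) < 2)]
        ring_nf
        nlinarith [hε, hQfk]
      linarith
    calc |gs S f k θ₂ A - gs S f k θ₂ B| ≤ Qf ^ k * |A - B| := hlip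
      _ ≤ Qf ^ k * (Kk + |u n - v| + Kk) := mul_le_mul_of_nonneg_left hAB hQfk
      _ = Qf ^ k * Kk + Qf ^ k * |u n - v| + Qf ^ k * Kk := by ring
      _ < ε / 4 + ε / 2 + ε / 4 := by linarith
      _ = ε := by ring
  have := hdiff.add hw'
  simp only [zero_add] at this
  exact this.congr fun n => by ring

lemma phim_S (hM : 0 < M)
    (hmaps : ∀ θ, MapsTo (f θ) (Icc (-M) M) (Ioo (-M) M))
    (hfc : ∀ θ, ContinuousOn (f θ) (Icc (-M) M))
    {φm : Θ → ℝ}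
    (hφm : ∀ ϑ : Θ, Monotone (fun n => fiter (⇑S) f n ((⇑S.symm)^[n] ϑ) (-M)) ∧
      Tendsto (fun n => fiter (⇑S) f n ((⇑S.symm)^[n] ϑ) (-M)) atTop (nhds (φm ϑ)))
    (θ : Θ) : φm (S θ) = f θ (φm θ) := by
  have hmI : -M ∈ Icc (-M) M := ⟨le_refl _, by linarith⟩
  have hmem : φm θ ∈ Icc (-M) M :=
    IsClosed.mem_of_tendsto isClosed_Icc (hφm θ).2
      (Eventually.of_forall fun n => gs_mapsTo S hmaps n θ hmI)
  have h1 : Tendsto (fun n : ℕ => gs S f (n + 1) (S θ) (-M)) atTop (nhds (φm (S θ))) :=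
    (hφm (S θ)).2.comp (tendsto_add_atTop_nat 1)
  have h2 : Tendsto (fun n : ℕ => f θ (gs S f n θ (-M))) atTop (nhds (f θ (φm θ))) :=
    ((hfc θ) _ hmem).tendsto.comp
      (tendsto_nhdsWithin_of_tendsto_nhds_of_eventually_within _ (hφm θ).2
        (Eventually.of_forall fun n => gs_mapsTo S hmaps n θ hmI))
  refine tendsto_nhds_unique (h1.congr fun n => ?_) h2
  rw [gs_succ, Equiv.symm_apply_apply]

lemma phip_S (hM : 0 < M)
    (hmaps : ∀ θ, MapsTo (f θ) (Icc (-M) M) (Ioo (-M) M))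
    (hfc : ∀ θ, ContinuousOn (f θ) (Icc (-M) M))
    {φp : Θ → ℝ}
    (hφp : ∀ ϑ : Θ, Antitone (fun n => fiter (⇑S) f n ((⇑S.symm)^[n] ϑ) M) ∧
      Tendsto (fun n => fiter (⇑S) f n ((⇑S.symm)^[n] ϑ) M) atTop (nhds (φp ϑ)))
    (θ : Θ) : φp (S θ) = f θ (φp θ) := by
  have hMI : M ∈ Icc (-M) M := ⟨by linarith, le_refl _⟩
  have hmem : φp θ ∈ Icc (-M) M :=
    IsClosed.mem_of_tendsto isClosed_Icc (hφp θ).2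
      (Eventually.of_forall fun n => gs_mapsTo S hmaps n θ hMI)
  have h1 : Tendsto (fun n : ℕ => gs S f (n + 1) (S θ) M) atTop (nhds (φp (S θ))) :=
    (hφp (S θ)).2.comp (tendsto_add_atTop_nat 1)
  have h2 : Tendsto (fun n : ℕ => f θ (gs S f n θ M)) atTop (nhds (f θ (φp θ))) :=
    ((hfc θ) _ hmem).tendsto.comp
      (tendsto_nhdsWithin_of_tendsto_nhds_of_eventually_within _ (hφp θ).2
        (Eventually.of_forall fun n => gs_mapsTo S hmaps n θ hMI))
  refine tendsto_nhds_unique (h1.congr fun n => ?_) h2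
  rw [gs_succ, Equiv.symm_apply_apply]

end Analytic

end Stmt12Aux

open Stmt12Aux in
/-- Theorem `Lem:f`, equation (2.9). The conjugation identity
`f_θ = G_{Sθ}⁻¹ ∘ f̂_θ ∘ G_θ` holds on `K(θ)` for every `θ`, where `G_θ = G_{θ,σΠθ}` and
`f̂_θ = f_{S⁻¹(σΠSθ)} ∘ G_{σΠθ, S⁻¹σΠSθ}`; equivalently `G_{Sθ} ∘ f_θ = f̂_θ ∘ G_θ` on
`K(θ)`. The maps `G_{θ,θ'}` are the uniform limits of the `G_{θ,θ',n}` over pairs in the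
same local stable fibre (relation `Rel`). -/
theorem stmt12 {Θ X : Type*} [MetricSpace Θ] [CompactSpace Θ]
    (S : Θ ≃ Θ) (M : ℝ) (hM : 0 < M)
    (f : Θ → ℝ → ℝ)
    (hmaps : ∀ θ, MapsTo (f θ) (Icc (-M) M) (Ioo (-M) M))
    (hmono : ∀ θ, StrictMonoOn (f θ) (Icc (-M) M))
    (hC1 : ∀ θ, ContDiffOn ℝ 1 (f θ) (Icc (-M) M))
    (hpos : ∀ θ, ∀ y ∈ Icc (-M) M, 0 < derivWithin (f θ) (Icc (-M) M) y)
    (L C α Qf : ℝ) (hL : 0 ≤ L) (hC : 0 < C) (hα : α ∈ Ioo (0:ℝ) 1)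
    (hLip : ∀ θ θ' : Θ, ∀ y ∈ Icc (-M) M, |f θ y - f θ' y| ≤ L * dist θ θ')
    (hQf : ∀ θ, ∀ y ∈ Icc (-M) M, derivWithin (f θ) (Icc (-M) M) y ≤ Qf)
    (hαQ : α * Qf < 1)
    -- bounding graphs
    (φm φp : Θ → ℝ)
    (hφp : ∀ ϑ : Θ, Antitone (fun n => fiter S f n ((⇑S.symm)^[n] ϑ) M) ∧
      Tendsto (fun n => fiter S f n ((⇑S.symm)^[n] ϑ) M) atTop (nhds (φp ϑ)))
    (hφm : ∀ ϑ : Θ, Monotone (fun n => fiter S f n ((⇑S.symm)^[n] ϑ) (-M)) ∧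
      Tendsto (fun n => fiter S f n ((⇑S.symm)^[n] ϑ) (-M)) atTop (nhds (φm ϑ)))
    -- the Markov factor structure (Hypothesis 2)
    (Sh : X → X) (Pr : Θ → X) (σ : X → Θ)
    (hPrσ : ∀ u, Pr (σ u) = u)
    (hfac : ∀ θ, Sh (Pr θ) = Pr (S.symm θ))
    -- the local-stable-fibre relation and its contraction property
    (Rel : Θ → Θ → Prop)
    (hRel : ∀ θ θ', Rel θ θ' → ∀ n : ℕ,
      dist ((⇑S.symm)^[n] θ) ((⇑S.symm)^[n] θ') ≤ C * α ^ n * dist θ θ')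
    (hRel1 : ∀ θ, Rel θ (σ (Pr θ)))
    (hRel2 : ∀ θ, Rel (σ (Pr θ)) (S.symm (σ (Pr (S θ)))))
    -- G_{θ,θ'} as uniform limit of the G_{θ,θ',n} for stable pairs
    (G : Θ → Θ → ℝ → ℝ)
    (hG : ∀ θ θ', Rel θ θ' →
      TendstoUniformlyOn (Gn S f M θ θ') (G θ θ') atTop (Icc (φm θ) (φp θ))) :
    ∀ θ : Θ, ∀ y ∈ Icc (φm θ) (φp θ),
      G (S θ) (σ (Pr (S θ))) (f θ y)
        = f (S.symm (σ (Pr (S θ))))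
            (G (σ (Pr θ)) (S.symm (σ (Pr (S θ)))) (G θ (σ (Pr θ)) y)) := by
  intro θ y hy
  have h0I : (0:ℝ) ∈ Icc (-M) M := ⟨by linarith, hM.le⟩
  have hQf0 : 0 ≤ Qf := (lt_of_lt_of_le (hpos θ 0 h0I) (hQf θ 0 h0I)).le
  have hfc : ∀ ϑ, ContinuousOn (f ϑ) (Icc (-M) M) := fun ϑ => (hC1 ϑ).continuousOn
  have hflip : ∀ ϑ, ∀ a ∈ Icc (-M) M, ∀ b ∈ Icc (-M) M,
      |f ϑ a - f ϑ b| ≤ Qf * |a - b| := by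
    intro ϑ a ha b hb
    have h := Convex.norm_image_sub_le_of_norm_derivWithin_le
      ((hC1 ϑ).differentiableOn one_ne_zero)
      (fun x hx => by
        rw [Real.norm_eq_abs, abs_of_pos (hpos ϑ x hx)]
        exact hQf ϑ x hx)
      (convex_Icc (-M) M) hb ha
    simpa [Real.norm_eq_abs] using h
  have hmIcc : -M ∈ Icc (-M) M := ⟨le_refl _, by linarith⟩
  have hMIcc : M ∈ Icc (-M) M := ⟨by linarith, le_refl _⟩
  have hφmem : ∀ ϑ : Θ, φm ϑ ∈ Icc (-M) M ∧ φp ϑ ∈ Icc (-M) M := fun ϑ =>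
    ⟨IsClosed.mem_of_tendsto isClosed_Icc (hφm ϑ).2
        (Eventually.of_forall fun n => gs_mapsTo S hmaps n ϑ hmIcc),
      IsClosed.mem_of_tendsto isClosed_Icc (hφp ϑ).2
        (Eventually.of_forall fun n => gs_mapsTo S hmaps n ϑ hMIcc)⟩
  have hymem : y ∈ Icc (-M) M :=
    ⟨le_trans (hφmem θ).1.1 hy.1, le_trans hy.2 (hφmem θ).2.2⟩
  set θ' := σ (Pr θ) with hθ'
  set θ'' := σ (Pr (S θ)) with hθ''
  -- choose preimages of y at each level
  have hsur : ∀ n : ℕ, ∃ t ∈ Icc (-M) M, gs S f n θ t = y := fun n =>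
    gs_surj S hM hmaps hfc hφp hφm θ n hy
  choose x hx hgx using hsur
  -- the sequence G_{θ,θ',n} y = gs n θ' (x n) converges to z := G θ θ' y
  have hGn1 : ∀ n, Gn S f M θ θ' n y = gs S f n θ' (x n) := fun n =>
    Gn_eq S hmaps hmono θ θ' n (hx n) (hgx n)
  have hz0 : Tendsto (fun n => Gn S f M θ θ' n y) atTop (nhds (G θ θ' y)) :=
    (hG θ θ' (hRel1 θ)).tendsto_at hy
  have hc : Tendsto (fun n => gs S f n θ' (x n)) atTop (nhds (G θ θ' y)) :=
    hz0.congr hGn1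
  set z := G θ θ' y with hzdef
  have hzI : z ∈ Icc (φm θ') (φp θ') := by
    constructor
    · refine le_of_tendsto_of_tendsto' (hφm θ').2 hc fun n => ?_
      exact (gs_mono S hmaps hmono n θ').monotoneOn hmIcc (hx n) (hx n).1
    · refine le_of_tendsto_of_tendsto' hc (hφp θ').2 fun n => ?_
      exact (gs_mono S hmaps hmono n θ').monotoneOn (hx n) hMIcc (hx n).2
  -- the moving-point limit
  have hw0 : Tendsto (fun n => Gn S f M θ' (S.symm θ'') n z) atTop
      (nhds (G θ' (S.symm θ'') z)) :=
    (hG θ' (S.symm θ'') (hRel2 θ)).tendsto_at hzI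
  have hmv : Tendsto (fun n => gs S f n (S.symm θ'') (x n)) atTop
      (nhds (G θ' (S.symm θ'') z)) :=
    moving S hM hL hC hα hQf0 hαQ hmaps hmono hfc hLip hflip hφp hφm θ' (S.symm θ'')
      (hRel θ' (S.symm θ'') (hRel2 θ)) hzI hw0 hx hc
  -- right-hand side limit
  have hGzI : G θ' (S.symm θ'') z ∈ Icc (-M) M :=
    IsClosed.mem_of_tendsto isClosed_Icc hmv
      (Eventually.of_forall fun n => gs_mapsTo S hmaps n _ (hx n))
  have hRHS : Tendsto (fun n => f (S.symm θ'') (gs S f n (S.symm θ'') (x n))) atTop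
      (nhds (f (S.symm θ'') (G θ' (S.symm θ'') z))) :=
    ((hfc (S.symm θ'')) _ hGzI).tendsto.comp
      (tendsto_nhdsWithin_of_tendsto_nhds_of_eventually_within _ hmv
        (Eventually.of_forall fun n => gs_mapsTo S hmaps n _ (hx n)))
  -- left-hand side limit
  have hfy : f θ y ∈ Icc (φm (S θ)) (φp (S θ)) := by
    constructor
    · rw [phim_S S hM hmaps hfc hφm θ]
      exact (hmono θ).monotoneOn (hφmem θ).1 hymem hy.1
    · rw [phip_S S hM hmaps hfc hφp θ]
      exact (hmono θ).monotoneOn hymem (hφmem θ).2 hy.2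
  have ha_eq : ∀ n, Gn S f M (S θ) θ'' (n + 1) (f θ y)
      = f (S.symm θ'') (gs S f n (S.symm θ'') (x n)) := by
    intro n
    have hpre : gs S f (n + 1) (S θ) (x n) = f θ y := by
      rw [gs_succ, Equiv.symm_apply_apply, hgx n]
    rw [Gn_eq S hmaps hmono (S θ) θ'' (n + 1) (hx n) hpre, gs_succ]
  have ha_lim : Tendsto (fun n => Gn S f M (S θ) θ'' (n + 1) (f θ y)) atTop
      (nhds (G (S θ) θ'' (f θ y))) :=
    ((hG (S θ) θ'' (hRel1 (S θ))).tendsto_at hfy).comp (tendsto_add_atTop_nat 1)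
  exact tendsto_nhds_unique (ha_lim.congr ha_eq) hRHS
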